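/- Let Φ:[0,∞)→[0,∞) be a continuous strictly increasing bijection of [0,∞) onto [0,∞) whose restriction to (0,∞) is slowly varying at 0. Let (Y_t)_{t≥0} be a subordinator with Laplace exponent Φ on some probability space. Then for every n ≥ 1, all times 0 = s₀ < s₁ < … < s_n, and all θ₁,…,θ_n > 0, x₁,…,x_n > 0: lim_{t→∞} E[ exp( −Σ_{j=1}^n θ_j·Φ^{-1}(x_j/t)·Y_{s_j·t} ) ] = exp( −Σ_{i=1}^n (s_i − s_{i−1})·max{x_i, x_{i+1}, …, x_n} ). -/

import Mathlib

open Real MeasureTheory Filter Set Topology ProbabilityTheory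


private lemma abel_nat (n : ℕ) (a f : ℕ → ℝ) (hf0 : f 0 = 0) :
    ∑ j ∈ Finset.range n, a j * f (j + 1)
      = ∑ i ∈ Finset.range n, (∑ j ∈ Finset.Ico i n, a j) * (f (i + 1) - f i) := by
  induction n with
  | zero => simp
  | succ n ih =>
    rw [Finset.sum_range_succ, ih, Finset.sum_range_succ]
    have h1 : ∀ i ∈ Finset.range n, (∑ j ∈ Finset.Ico i (n+1), a j) * (f (i+1) - f i)
        = (∑ j ∈ Finset.Ico i n, a j) * (f (i+1) - f i) + a n * (f (i+1) - f i) := by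
      intro i hi
      rw [Finset.sum_Ico_succ_top (le_of_lt (Finset.mem_range.mp hi)), add_mul]
    rw [Finset.sum_congr rfl h1, Finset.sum_add_distrib, ← Finset.mul_sum,
      Finset.sum_range_sub f n, Nat.Ico_succ_singleton, Finset.sum_singleton, hf0]
    ring

private lemma integral_finset_prod_indep {Ω : Type*} [MeasurableSpace Ω] (P : Measure Ω)
    [IsProbabilityMeasure P] {ι : Type*} (sfin : Finset ι) (g : ι → Ω → ℝ)
    (hind : iIndepFun (m := fun _ => Real.measurableSpace) g P)
    (hmeas : ∀ i, Measurable (g i)) :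
    ∫ ω, ∏ i ∈ sfin, g i ω ∂P = ∏ i ∈ sfin, ∫ ω, g i ω ∂P := by
  classical
  induction sfin using Finset.induction_on with
  | empty => simp
  | @insert j s hj ih =>
    simp only [Finset.prod_insert hj]
    have hind2 : IndepFun (fun ω => ∏ i ∈ s, g i ω) (g j) P := by
      have h := hind.indepFun_finsetProd_of_notMem hmeas hj
      have he : (∏ i ∈ s, g i) = fun ω => ∏ i ∈ s, g i ω := by
        funext ω; simp [Finset.prod_apply]
      rwa [he] at h
    rw [← ih]
    exact hind2.symm.integral_mul_eq_mul_integral (hmeas j).aestronglyMeasurable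
      (Finset.measurable_prod s fun i _ => hmeas i).aestronglyMeasurable

private lemma tendsto_t_phi (Φ Φinv : ℝ → ℝ) (hΦ0 : Φ 0 = 0)
    (hΦmono : StrictMonoOn Φ (Ici 0))
    (hΦinv : ∀ x ≥ (0:ℝ), Φinv (Φ x) = x ∧ Φ (Φinv x) = x ∧ 0 ≤ Φinv x)
    (hSV : ∀ l > (0:ℝ), Tendsto (fun x => Φ (l * x) / Φ x) (𝓝[>] 0) (𝓝 1))
    (c a : ℝ) (hc : 0 < c) (ha : 0 < a) :
    Tendsto (fun t => t * Φ (c * Φinv (a / t))) atTop (𝓝 a) := by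
  have hΦpos : ∀ u : ℝ, 0 < u → 0 < Φ u := fun u hu => by
    have := hΦmono (self_mem_Ici) (mem_Ici.2 hu.le) hu
    rwa [hΦ0] at this
  have hinvpos : ∀ y : ℝ, 0 < y → 0 < Φinv y := by
    intro y hy
    rcases (hΦinv y hy.le).2.2.lt_or_eq with h | h
    · exact h
    · exfalso
      have := (hΦinv y hy.le).2.1
      rw [← h, hΦ0] at this; linarith
  -- a / t tends to 0 within (0, ∞)
  have hdiv : Tendsto (fun t : ℝ => a / t) atTop (𝓝[>] 0) := by
    rw [tendsto_nhdsWithin_iff]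
    constructor
    · simpa [div_eq_mul_inv] using tendsto_inv_atTop_zero.const_mul a
    · filter_upwards [eventually_gt_atTop (0:ℝ)] with t ht
      exact mem_Ioi.2 (div_pos ha ht)
  -- Φinv tends to 0 within (0, ∞)
  have hinvT : Tendsto Φinv (𝓝[>] (0:ℝ)) (𝓝[>] 0) := by
    rw [tendsto_nhdsWithin_iff]
    constructor
    · rw [tendsto_order]
      constructor
      · intro b hb
        filter_upwards [self_mem_nhdsWithin] with y hy
        exact lt_of_lt_of_le hb (hΦinv y (le_of_lt hy)).2.2
      · intro b hb
        have hIio : Iio (Φ b) ∈ 𝓝[>] (0:ℝ) :=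
          nhdsWithin_le_nhds (Iio_mem_nhds (hΦpos b hb))
        filter_upwards [hIio, self_mem_nhdsWithin] with y h1 h2
        by_contra h
        push_neg at h
        have := hΦmono.monotoneOn (mem_Ici.2 hb.le)
          (mem_Ici.2 (hΦinv y (le_of_lt h2)).2.2) h
        rw [(hΦinv y (le_of_lt h2)).2.1] at this
        exact absurd h1 (not_lt.2 this)
    · filter_upwards [self_mem_nhdsWithin] with y hy
      exact mem_Ioi.2 (hinvpos y hy)
  have hu : Tendsto (fun t : ℝ => Φinv (a / t)) atTop (𝓝[>] 0) := hinvT.comp hdiv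
  have hq : Tendsto (fun t : ℝ => Φ (c * Φinv (a / t)) / Φ (Φinv (a / t))) atTop (𝓝 1) :=
    (hSV c hc).comp hu
  have hq2 : Tendsto (fun t : ℝ => a * (Φ (c * Φinv (a / t)) / Φ (Φinv (a / t)))) atTop
      (𝓝 a) := by
    have := hq.const_mul a
    simpa using this
  apply hq2.congr'
  filter_upwards [eventually_gt_atTop (0:ℝ)] with t ht
  have hat : (0:ℝ) ≤ a / t := (div_pos ha ht).le
  rw [(hΦinv (a / t) hat).2.1]
  field_simp



/-- convergence of the joint Laplace transforms of the
renormalised subordinator towards those of an extremal process. -/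
theorem stmt_17
    {Ω : Type*} [MeasurableSpace Ω] (P : Measure Ω) [IsProbabilityMeasure P]
    (Y : ℝ → Ω → ℝ)
    (hYmeas : ∀ t, Measurable (Y t))
    (hY0 : ∀ᵐ ω ∂P, Y 0 ω = 0)
    (hYnonneg : ∀ t : ℝ, 0 ≤ t → ∀ᵐ ω ∂P, 0 ≤ Y t ω)
    (hYmono : ∀ s t : ℝ, 0 ≤ s → s ≤ t → ∀ᵐ ω ∂P, Y s ω ≤ Y t ω)
    (hYindep : ∀ (m : ℕ) (τ : Fin (m + 1) → ℝ), (∀ i, 0 ≤ τ i) → Monotone τ →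
      iIndepFun (m := fun _ : Fin m => Real.measurableSpace)
        (fun i ω => Y (τ i.succ) ω - Y (τ i.castSucc) ω) P)
    -- Φ : continuous strictly increasing bijection of [0,∞) onto [0,∞)
    (Φ Φinv : ℝ → ℝ)
    (hΦ0 : Φ 0 = 0)
    (hΦmono : StrictMonoOn Φ (Ici 0))
    (hΦcont : ContinuousOn Φ (Ici 0))
    (hΦsurj : Φ '' (Ici 0) = Ici 0)
    (hΦinv : ∀ x ≥ (0:ℝ), Φinv (Φ x) = x ∧ Φ (Φinv x) = x ∧ 0 ≤ Φinv x)
    (hSV : ∀ l > (0:ℝ), Tendsto (fun x => Φ (l * x) / Φ x) (𝓝[>] 0) (𝓝 1))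
    -- (Y_t) is a subordinator with Laplace exponent Φ
    (hLaplace : ∀ s t l : ℝ, 0 ≤ s → s ≤ t → 0 ≤ l →
      ∫ ω, Real.exp (-(l * (Y t ω - Y s ω))) ∂P = Real.exp (-((t - s) * Φ l)))
    (n : ℕ) (hn : 0 < n)
    (s : Fin (n + 1) → ℝ) (hs0 : s 0 = 0) (hsmono : StrictMono s)
    (θ x : Fin n → ℝ) (hθ : ∀ j, 0 < θ j) (hx : ∀ j, 0 < x j) :
    Tendsto
      (fun t => ∫ ω, Real.exp (-(∑ j, θ j * Φinv (x j / t) * Y (s j.succ * t) ω)) ∂P)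
      atTop
      (𝓝 (Real.exp (-(∑ i : Fin n, (s i.succ - s i.castSucc) *
        ((Finset.univ.filter fun j => i ≤ j).sup'
          ⟨i, by simp⟩ x))))) := by
  classical
  -- basic facts
  have hspos : ∀ i : Fin (n+1), 0 ≤ s i := fun i => by
    have := hsmono.monotone (Fin.zero_le i)
    rwa [hs0] at this
  have hΦinvnn : ∀ y : ℝ, 0 ≤ y → 0 ≤ Φinv y := fun y hy => (hΦinv y hy).2.2
  have hΦinvmono : ∀ u v : ℝ, 0 ≤ u → u ≤ v → Φinv u ≤ Φinv v := by
    intro u v hu huv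
    by_contra h
    push_neg at h
    have h1 := hΦinv u hu
    have h2 := hΦinv v (hu.trans huv)
    have := hΦmono (mem_Ici.2 h2.2.2) (mem_Ici.2 h1.2.2) h
    rw [h1.2.1, h2.2.1] at this
    linarith
  have hΦmonoOn := hΦmono.monotoneOn
  -- the filter sets and sups
  set Fi : Fin n → Finset (Fin n) := fun i => Finset.univ.filter fun j => i ≤ j with hFi
  have hFne : ∀ i : Fin n, (Fi i).Nonempty := fun i =>
    ⟨i, Finset.mem_filter.2 ⟨Finset.mem_univ _, le_refl _⟩⟩
  set M : Fin n → ℝ := fun i => (Fi i).sup' (hFne i) x with hM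
  -- the key exact computation for fixed t > 0
  have key : ∀ t : ℝ, 0 < t →
      ∫ ω, Real.exp (-(∑ j, θ j * Φinv (x j / t) * Y (s j.succ * t) ω)) ∂P
        = Real.exp (-(∑ i : Fin n, (s i.succ - s i.castSucc) *
            (t * Φ (∑ j ∈ Fi i, θ j * Φinv (x j / t))))) := by
    intro t ht
    set L : Fin n → ℝ := fun i => ∑ j ∈ Fi i, θ j * Φinv (x j / t) with hLdef
    have hanonneg : ∀ j : Fin n, 0 ≤ θ j * Φinv (x j / t) :=
      fun j => mul_nonneg (hθ j).le (hΦinvnn _ (div_nonneg (hx j).le ht.le))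
    have hL0 : ∀ i, 0 ≤ L i := fun i => Finset.sum_nonneg fun j _ => hanonneg j
    -- Abel summation pointwise
    have stepA : ∀ ω : Ω, Y 0 ω = 0 →
        ∑ j : Fin n, θ j * Φinv (x j / t) * Y (s j.succ * t) ω
          = ∑ i : Fin n, L i * (Y (s i.succ * t) ω - Y (s i.castSucc * t) ω) := by
      intro ω hω
      set A : ℕ → ℝ := fun j => if h : j < n then θ ⟨j, h⟩ * Φinv (x ⟨j, h⟩ / t) else 0 with hA
      set F : ℕ → ℝ := fun k => if h : k < n + 1 then Y (s ⟨k, h⟩ * t) ω else 0 with hF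
      have hF0 : F 0 = 0 := by
        have h0 : (⟨0, Nat.succ_pos n⟩ : Fin (n+1)) = 0 := rfl
        simp only [hF, dif_pos (Nat.succ_pos n), h0, hs0, zero_mul, hω]
      have habel := abel_nat n A F hF0
      have hAval : ∀ j : Fin n, A j.val = θ j * Φinv (x j / t) := by
        intro j
        simp only [hA, dif_pos j.isLt, Fin.eta]
      have hFsucc : ∀ j : Fin n, F (j.val + 1) = Y (s j.succ * t) ω := by
        intro j
        have h : j.val + 1 < n + 1 := Nat.succ_lt_succ j.isLt
        have he : (⟨j.val + 1, h⟩ : Fin (n+1)) = j.succ := by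
          apply Fin.ext; simp
        simp only [hF, dif_pos h, he]
      have hFcast : ∀ j : Fin n, F j.val = Y (s j.castSucc * t) ω := by
        intro j
        have h : j.val < n + 1 := Nat.lt_succ_of_lt j.isLt
        have he : (⟨j.val, h⟩ : Fin (n+1)) = j.castSucc := by
          apply Fin.ext; simp
        simp only [hF, dif_pos h, he]
      have hIcoL : ∀ i : Fin n, ∑ j ∈ Finset.Ico i.val n, A j = L i := by
        intro i
        have hIco : Finset.Ico i.val n = (Finset.range n).filter (fun j => i.val ≤ j) := by
          ext k
          simp [Finset.mem_Ico, Finset.mem_filter, Finset.mem_range, and_comm]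
        rw [hIco, Finset.sum_filter,
          ← Fin.sum_univ_eq_sum_range (fun j => if i.val ≤ j then A j else 0) n]
        simp only [hLdef, hFi]
        rw [Finset.sum_filter]
        refine Finset.sum_congr rfl fun j _ => ?_
        by_cases h : i ≤ j
        · rw [if_pos (Fin.le_def.mp h), if_pos h, hAval]
        · rw [if_neg (fun hc => h (Fin.le_def.mpr hc)), if_neg h]
      have hlhs : ∑ j : Fin n, θ j * Φinv (x j / t) * Y (s j.succ * t) ω
          = ∑ j ∈ Finset.range n, A j * F (j + 1) := by
        rw [← Fin.sum_univ_eq_sum_range (fun j => A j * F (j+1)) n]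
        exact Finset.sum_congr rfl fun j _ => by rw [hAval, hFsucc]
      have hrhs : ∑ i : Fin n, L i * (Y (s i.succ * t) ω - Y (s i.castSucc * t) ω)
          = ∑ i ∈ Finset.range n, (∑ j ∈ Finset.Ico i n, A j) * (F (i + 1) - F i) := by
        rw [← Fin.sum_univ_eq_sum_range
          (fun i => (∑ j ∈ Finset.Ico i n, A j) * (F (i+1) - F i)) n]
        exact Finset.sum_congr rfl fun i _ => by rw [hIcoL, hFsucc, hFcast]
      rw [hlhs, habel, ← hrhs]
    -- independence of increments
    have hτnonneg : ∀ i : Fin (n+1), 0 ≤ s i * t := fun i => mul_nonneg (hspos i) ht.le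
    have hτmono : Monotone (fun i : Fin (n+1) => s i * t) := fun i j hij =>
      mul_le_mul_of_nonneg_right (hsmono.monotone hij) ht.le
    have hindep := hYindep n (fun i => s i * t) hτnonneg hτmono
    set g : Fin n → Ω → ℝ := fun i ω =>
      Real.exp (-(L i * (Y (s i.succ * t) ω - Y (s i.castSucc * t) ω))) with hg
    have hgind : iIndepFun (m := fun _ : Fin n => Real.measurableSpace) g P := by
      have := hindep.comp (fun i (v : ℝ) => Real.exp (-(L i * v)))
        (fun i => ((measurable_id.const_mul (L i)).neg).exp)
      exact this
    have hgmeas : ∀ i, Measurable (g i) := fun i =>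
      ((((hYmeas _).sub (hYmeas _)).const_mul (L i)).neg).exp
    have hae : (fun ω => Real.exp (-(∑ j, θ j * Φinv (x j / t) * Y (s j.succ * t) ω)))
        =ᵐ[P] fun ω => ∏ i, g i ω := by
      filter_upwards [hY0] with ω hω
      rw [stepA ω hω, hg, ← Real.exp_sum]
      congr 1
      exact (Finset.sum_neg_distrib _).symm
    rw [integral_congr_ae hae,
      integral_finset_prod_indep P Finset.univ g hgind hgmeas]
    have hterm : ∀ i : Fin n, ∫ ω, g i ω ∂P
        = Real.exp (-((s i.succ * t - s i.castSucc * t) * Φ (L i))) := fun i =>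
      hLaplace (s i.castSucc * t) (s i.succ * t) (L i) (hτnonneg _)
        (hτmono (Fin.castSucc_le_succ i)) (hL0 i)
    rw [Finset.prod_congr rfl fun i _ => hterm i, ← Real.exp_sum]
    congr 1
    rw [← Finset.sum_neg_distrib]
    exact Finset.sum_congr rfl fun i _ => by ring
  -- the limit of each exponent term
  have hLlim : ∀ i : Fin n,
      Tendsto (fun t => t * Φ (∑ j ∈ Fi i, θ j * Φinv (x j / t))) atTop (𝓝 (M i)) := by
    intro i
    obtain ⟨j0, hj0mem, hj0⟩ := Finset.exists_mem_eq_sup' (hFne i) x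
    have hMi : M i = x j0 := hj0
    have hMpos : 0 < M i := hMi ▸ hx j0
    set C : ℝ := ∑ j ∈ Fi i, θ j with hC
    have hCpos : 0 < C := Finset.sum_pos (fun j _ => hθ j) (hFne i)
    have hlow := tendsto_t_phi Φ Φinv hΦ0 hΦmono hΦinv hSV (θ j0) (M i) (hθ j0) hMpos
    have hup := tendsto_t_phi Φ Φinv hΦ0 hΦmono hΦinv hSV C (M i) hCpos hMpos
    refine tendsto_of_tendsto_of_tendsto_of_le_of_le' hlow hup ?_ ?_
    · filter_upwards [eventually_gt_atTop (0:ℝ)] with t ht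
      have hnn : ∀ j : Fin n, 0 ≤ θ j * Φinv (x j / t) :=
        fun j => mul_nonneg (hθ j).le ((hΦinv _ (div_nonneg (hx j).le ht.le)).2.2)
      have h1 : θ j0 * Φinv (M i / t) ≤ ∑ j ∈ Fi i, θ j * Φinv (x j / t) := by
        rw [hMi]
        exact Finset.single_le_sum (fun j _ => hnn j) hj0mem
      have h0a : (0:ℝ) ≤ θ j0 * Φinv (M i / t) :=
        mul_nonneg (hθ j0).le ((hΦinv _ (div_nonneg hMpos.le ht.le)).2.2)
      have h0b : (0:ℝ) ≤ ∑ j ∈ Fi i, θ j * Φinv (x j / t) :=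
        Finset.sum_nonneg fun j _ => hnn j
      exact mul_le_mul_of_nonneg_left
        (hΦmonoOn (mem_Ici.2 h0a) (mem_Ici.2 h0b) h1) ht.le
    · filter_upwards [eventually_gt_atTop (0:ℝ)] with t ht
      have hnn : ∀ j : Fin n, 0 ≤ θ j * Φinv (x j / t) :=
        fun j => mul_nonneg (hθ j).le ((hΦinv _ (div_nonneg (hx j).le ht.le)).2.2)
      have h2 : ∑ j ∈ Fi i, θ j * Φinv (x j / t) ≤ C * Φinv (M i / t) := by
        rw [hC, Finset.sum_mul]
        refine Finset.sum_le_sum fun j hj => ?_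
        refine mul_le_mul_of_nonneg_left ?_ (hθ j).le
        refine hΦinvmono _ _ (div_nonneg (hx j).le ht.le) ?_
        exact (div_le_div_iff_of_pos_right ht).mpr (Finset.le_sup' x hj)
      have h0b : (0:ℝ) ≤ ∑ j ∈ Fi i, θ j * Φinv (x j / t) :=
        Finset.sum_nonneg fun j _ => hnn j
      have h0c : (0:ℝ) ≤ C * Φinv (M i / t) :=
        mul_nonneg hCpos.le ((hΦinv _ (div_nonneg hMpos.le ht.le)).2.2)
      exact mul_le_mul_of_nonneg_left
        (hΦmonoOn (mem_Ici.2 h0b) (mem_Ici.2 h0c) h2) ht.le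
  -- assemble
  have hsum : Tendsto (fun t => ∑ i : Fin n, (s i.succ - s i.castSucc) *
      (t * Φ (∑ j ∈ Fi i, θ j * Φinv (x j / t)))) atTop
      (𝓝 (∑ i : Fin n, (s i.succ - s i.castSucc) * M i)) :=
    tendsto_finset_sum _ fun i _ => (hLlim i).const_mul _
  have hexp : Tendsto (fun t => Real.exp (-(∑ i : Fin n, (s i.succ - s i.castSucc) *
      (t * Φ (∑ j ∈ Fi i, θ j * Φinv (x j / t)))))) atTop
      (𝓝 (Real.exp (-(∑ i : Fin n, (s i.succ - s i.castSucc) * M i)))) :=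
    (Real.continuous_exp.tendsto _).comp hsum.neg
  have hMeq : ∀ i : Fin n, ((Finset.univ.filter fun j => i ≤ j).sup'
      (⟨i, by simp⟩ : ((Finset.univ.filter fun j => i ≤ j) : Finset (Fin n)).Nonempty) x)
      = M i := fun i => rfl
  have hgoal : Tendsto
      (fun t => ∫ ω, Real.exp (-(∑ j, θ j * Φinv (x j / t) * Y (s j.succ * t) ω)) ∂P)
      atTop (𝓝 (Real.exp (-(∑ i : Fin n, (s i.succ - s i.castSucc) * M i)))) := by
    apply hexp.congr'
    filter_upwards [eventually_gt_atTop (0:ℝ)] with t ht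
    exact (key t ht).symm
  simpa only [hMeq] using hgoal
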